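/- Let n > 0 and y₀ > 0 be reals and let f : [0,T) → ℝ be differentiable with f(0) ≥ y₀ and f'(t) ≥ f(t)³/n for all t ∈ [0,T). Then T ≤ n/(2y₀²). -/

import Mathlib

theorem stmt_9 (n y₀ T : ℝ) (hn : 0 < n) (hy : 0 < y₀)
    (f f' : ℝ → ℝ) (h0 : y₀ ≤ f 0)
    (hderiv : ∀ t ∈ Set.Ico (0 : ℝ) T, HasDerivAt f (f' t) t)
    (hineq : ∀ t ∈ Set.Ico (0 : ℝ) T, f t ^ 3 / n ≤ f' t) :
    T ≤ n / (2 * y₀ ^ 2) := by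
  by_contra hT
  push_neg at hT
  set c := n / (2 * y₀ ^ 2) with hc
  have hc0 : 0 < c := by positivity
  -- Step 1: f ≥ y₀ on [0,T)
  have hpos : ∀ t ∈ Set.Ico (0 : ℝ) T, y₀ ≤ f t := by
    intro t ht
    by_contra hlt
    push_neg at hlt
    obtain ⟨ht0, htT⟩ := ht
    have hsub : Set.Icc (0 : ℝ) t ⊆ Set.Ico 0 T := fun s hs =>
      ⟨hs.1, lt_of_le_of_lt hs.2 htT⟩
    have hcont : ContinuousOn f (Set.Icc 0 t) := fun s hs =>
      ((hderiv s (hsub hs)).continuousAt).continuousWithinAt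
    set S := {s ∈ Set.Icc (0 : ℝ) t | f s < y₀} with hSdef
    have hSne : S.Nonempty := ⟨t, ⟨⟨ht0, le_rfl⟩, hlt⟩⟩
    have hSbdd : BddBelow S := ⟨0, fun s hs => hs.1.1⟩
    set t₁ := sInf S with ht₁def
    have ht₁cl : t₁ ∈ closure S := csInf_mem_closure hSne hSbdd
    have hclosed : IsClosed (Set.Icc (0 : ℝ) t ∩ f ⁻¹' Set.Iic y₀) :=
      hcont.preimage_isClosed_of_isClosed isClosed_Icc isClosed_Iic
    have hSsub : S ⊆ Set.Icc (0 : ℝ) t ∩ f ⁻¹' Set.Iic y₀ := fun s hs =>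
      ⟨hs.1, le_of_lt hs.2⟩
    have ht₁mem : t₁ ∈ Set.Icc (0 : ℝ) t ∩ f ⁻¹' Set.Iic y₀ :=
      hclosed.closure_subset ((closure_mono hSsub) ht₁cl)
    have ht₁Icc : t₁ ∈ Set.Icc (0 : ℝ) t := ht₁mem.1
    have hft₁le : f t₁ ≤ y₀ := ht₁mem.2
    -- f t₁ ≥ y₀
    have hft₁ge : y₀ ≤ f t₁ := by
      by_contra h'
      push_neg at h'
      have ht₁pos : 0 < t₁ := by
        rcases lt_or_eq_of_le ht₁Icc.1 with h | h
        · exact h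
        · exact absurd (h ▸ h') (not_lt.2 h0)
      have hcw : ContinuousWithinAt f (Set.Ioo 0 t₁) t₁ :=
        (hcont t₁ ht₁Icc).mono (fun s hs => ⟨le_of_lt hs.1, le_trans (le_of_lt hs.2) ht₁Icc.2⟩)
      have hev : ∀ᶠ s in nhdsWithin t₁ (Set.Ioo 0 t₁), f s < y₀ := hcw (Iio_mem_nhds h')
      have hne : (nhdsWithin t₁ (Set.Ioo 0 t₁)).NeBot := by
        apply mem_closure_iff_nhdsWithin_neBot.1
        rw [closure_Ioo (ne_of_lt ht₁pos)]
        exact ⟨le_of_lt ht₁pos, le_rfl⟩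
      obtain ⟨s, hsf, hsIoo⟩ := (hev.and (eventually_mem_nhdsWithin)).exists
      have hsS : s ∈ S :=
        ⟨⟨le_of_lt hsIoo.1, le_trans (le_of_lt hsIoo.2) ht₁Icc.2⟩, hsf⟩
      exact absurd (csInf_le hSbdd hsS) (not_le.2 hsIoo.2)
    have hft₁ : f t₁ = y₀ := le_antisymm hft₁le hft₁ge
    have ht₁Ico : t₁ ∈ Set.Ico (0 : ℝ) T := hsub ht₁Icc
    have hf'pos : 0 < f' t₁ := by
      have hi := hineq t₁ ht₁Ico
      rw [hft₁] at hi
      have h3 : 0 < y₀ ^ 3 / n := by positivity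
      linarith
    have hd := hderiv t₁ ht₁Ico
    rw [hasDerivAt_iff_tendsto_slope] at hd
    have hev : ∀ᶠ s in nhdsWithin t₁ {t₁}ᶜ, slope f t₁ s ∈ Set.Ioi (0 : ℝ) :=
      hd (Ioi_mem_nhds hf'pos)
    rw [Filter.Eventually, Metric.mem_nhdsWithin_iff] at hev
    obtain ⟨δ, hδ, hball'⟩ := hev
    have hball : ∀ s : ℝ, s ≠ t₁ → dist s t₁ < δ → slope f t₁ s ∈ Set.Ioi (0 : ℝ) :=
      fun s hne hd' => hball' ⟨Metric.mem_ball.2 hd', hne⟩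
    have hlt' : sInf S < t₁ + δ := by rw [← ht₁def]; linarith
    obtain ⟨s, hsS, hslt⟩ := exists_lt_of_csInf_lt hSne hlt'
    have hst₁ : t₁ ≤ s := csInf_le hSbdd hsS
    have hsne : s ≠ t₁ := by
      intro h
      have h2 : f s < y₀ := hsS.2
      rw [h, hft₁] at h2
      exact lt_irrefl y₀ h2
    have hst₁' : t₁ < s := lt_of_le_of_ne hst₁ (Ne.symm hsne)
    have hdist : dist s t₁ < δ := by
      rw [Real.dist_eq, abs_of_nonneg (by linarith)]
      linarith
    have hslope := hball s hsne hdist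
    rw [Set.mem_Ioi, slope_def_field] at hslope
    have h1 : 0 < s - t₁ := by linarith
    have : 0 < f s - f t₁ := by
      have h2 := mul_pos hslope h1
      rwa [div_mul_cancel₀ _ (ne_of_gt h1)] at h2
    rw [hft₁] at this
    have : y₀ < f s := by linarith
    exact absurd hsS.2 (not_lt.2 (le_of_lt this))
  -- Step 2
  have key : ∀ t ∈ Set.Ico (0 : ℝ) T, t < c := by
    intro t ht
    obtain ⟨ht0, htT⟩ := ht
    have hsub : Set.Icc (0 : ℝ) t ⊆ Set.Ico 0 T := fun s hs =>
      ⟨hs.1, lt_of_le_of_lt hs.2 htT⟩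
    set h : ℝ → ℝ := fun s => 2 * s / n + (f s ^ 2)⁻¹ with hh
    have hderivh : ∀ x ∈ Set.Icc (0 : ℝ) t,
        HasDerivAt h (2 / n + -(2 * f x * f' x) / (f x ^ 2) ^ 2) x := by
      intro x hx
      have hfx : 0 < f x := lt_of_lt_of_le hy (hpos x (hsub hx))
      have h1 : HasDerivAt (fun s => 2 * s / n) (2 / n) x := by
        simpa using ((hasDerivAt_id x).const_mul 2).div_const n
      have h2 : HasDerivAt (fun s => f s ^ 2) (2 * f x * f' x) x := by
        have := (hderiv x (hsub hx)).pow 2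
        exact this.congr_deriv (by norm_num)
      have h3 : HasDerivAt (fun s => (f s ^ 2)⁻¹)
          (-(2 * f x * f' x) / (f x ^ 2) ^ 2) x :=
        h2.inv (by positivity)
      exact h1.add h3
    have hanti : AntitoneOn h (Set.Icc 0 t) := by
      apply antitoneOn_of_deriv_nonpos (convex_Icc 0 t)
      · exact fun x hx => (hderivh x hx).continuousAt.continuousWithinAt
      · intro x hx
        rw [interior_Icc] at hx
        exact ((hderivh x (Set.mem_Icc_of_Ioo hx)).differentiableAt).differentiableWithinAt
      · intro x hx
        rw [interior_Icc] at hx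
        have hx' := Set.mem_Icc_of_Ioo hx
        rw [(hderivh x hx').deriv]
        have hfx : 0 < f x := lt_of_lt_of_le hy (hpos x (hsub hx'))
        have hi := hineq x (hsub hx')
        have hi' : f x ^ 3 ≤ n * f' x := by
          rw [div_le_iff₀ hn] at hi; linarith [hi]
        have hkey : 2 / n ≤ 2 * f x * f' x / (f x ^ 2) ^ 2 := by
          rw [div_le_div_iff₀ hn (by positivity)]
          nlinarith [hi', hfx, sq_nonneg (f x)]
        rw [neg_div]
        linarith [hkey]
    have hle : h t ≤ h 0 := hanti ⟨le_rfl, ht0⟩ ⟨ht0, le_rfl⟩ ht0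
    have hf0 : (f 0 ^ 2)⁻¹ ≤ (y₀ ^ 2)⁻¹ := by
      apply inv_anti₀ (by positivity)
      nlinarith [h0, hy]
    have hft : 0 < (f t ^ 2)⁻¹ := by
      have : 0 < f t := lt_of_lt_of_le hy (hpos t ⟨ht0, htT⟩)
      positivity
    have hmain : 2 * t / n < (y₀ ^ 2)⁻¹ := by
      simp only [hh] at hle
      calc 2 * t / n < 2 * t / n + (f t ^ 2)⁻¹ := by linarith
        _ ≤ 2 * 0 / n + (f 0 ^ 2)⁻¹ := hle
        _ ≤ (y₀ ^ 2)⁻¹ := by simpa using hf0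
    rw [hc, lt_div_iff₀ (by positivity)]
    rw [div_lt_iff₀ hn] at hmain
    rw [inv_eq_one_div, div_mul_eq_mul_div, lt_div_iff₀ (by positivity)] at hmain
    nlinarith [hmain]
  exact absurd (key c ⟨le_of_lt hc0, hT⟩) (lt_irrefl c)
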